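/- Let f = (f₁,…,f_N) ∈ ℂ[x₁,…,xₙ]^N, ξ* ∈ ℂⁿ, and let B = {(x−ξ*)^{β₁},…,(x−ξ*)^{β_μ}} be closed under division with β₁ = 0. Let Λ* = {Λ*₁,…,Λ*_μ} ⊂ ℂ[d_{ξ*}] be dual to B, with Λ*₁ = 1, such that D* = span(Λ*) is stable under each derivation ∂_{d_k}. Define ε*_{i,j} := Λ*_j(f_i) and the perturbed system f_{i,ε*} := f_i − Σ_{j=1}^μ ε*_{i,j} (x−ξ*)^{β_j} for i = 1,…,N. Then: (1) Λ*_j(f_{i,ε*}) = 0 for all i = 1,…,N and j = 1,…,μ, so every element of D* vanishes on the ideal (f_{1,ε*},…,f_{N,ε*}); (2) if moreover D* is complete for f_{ε*} at ξ* (every Δ ∈ ℂ[d_{ξ*}] with ∂_{d_k}(Δ) ∈ D* for all k and Δ(f_{i,ε*}) = 0 for all i lies in D*), then D* = (f_{ε*})^⊥ ∩ ℂ[d_{ξ*}], i.e., ξ* is an isolated root of the perturbed system f_{ε*} of multiplicity exactly μ with inverse system D*. -/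

import Mathlib

open MvPolynomial

/-- Total degree `|β|` of an exponent vector `β ∈ ℕⁿ`. -/
def mdeg {n : ℕ} (a : Fin n →₀ ℕ) : ℕ := ∑ i, a i

/-- Iterated partial derivative `∂^β p`. -/
noncomputable def pdiff {n : ℕ} (β : Fin n →₀ ℕ) (p : MvPolynomial (Fin n) ℂ) :
    MvPolynomial (Fin n) ℂ :=
  (List.finRange n).foldr (fun i q => (fun r => pderiv i r)^[β i] q) p

/-- The linear functional on `ℂ[x]` attached to the dual polynomial `Λ ∈ ℂ[d_ξ]`:
`Λ(p) = Σ_β coeff_β(Λ) • (∂^β p)(ξ)`. -/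
noncomputable def dapply {n : ℕ} (ξ : Fin n → ℂ) (Λ p : MvPolynomial (Fin n) ℂ) : ℂ :=
  ∑ β ∈ Λ.support, coeff β Λ * eval ξ (pdiff β p)

/-- The shifted monomial `(x-ξ)^β`. -/
noncomputable def xpow {n : ℕ} (ξ : Fin n → ℂ) (β : Fin n →₀ ℕ) : MvPolynomial (Fin n) ℂ :=
  ∏ i, (X i - C (ξ i)) ^ β i

/-- `∫ᵏΛ`: substitute `0` for `d_{k+1},…,d_n` in `Λ` and take the antiderivative with
respect to `d_k` having no constant term. -/
noncomputable def integ {n : ℕ} (k : Fin n) (Λ : MvPolynomial (Fin n) ℂ) :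
    MvPolynomial (Fin n) ℂ :=
  let Λ' := aeval (fun i => if i ≤ k then X i else 0) Λ
  ∑ β ∈ Λ'.support, monomial (β + Finsupp.single k 1) (coeff β Λ' / ((β k : ℂ) + 1))

/-- The maximal ideal `m_ξ` of polynomials vanishing at `ξ`. -/
noncomputable def mIdeal {n : ℕ} (ξ : Fin n → ℂ) : Ideal (MvPolynomial (Fin n) ℂ) :=
  RingHom.ker (eval ξ)

/-- `β! = β₁!⋯βₙ!`. -/
def ffact {n : ℕ} (a : Fin n →₀ ℕ) : ℕ := ∏ i, (a i).factorial

section Aux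
variable {n : ℕ}

lemma iterPD_add (i : Fin n) (m : ℕ) (p q : MvPolynomial (Fin n) ℂ) :
    (fun r => pderiv i r)^[m] (p + q)
      = (fun r => pderiv i r)^[m] p + (fun r => pderiv i r)^[m] q := by
  induction m with
  | zero => rfl
  | succ m ih => simp [Function.iterate_succ_apply', ih]

lemma iterPD_smul (i : Fin n) (m : ℕ) (c : ℂ) (p : MvPolynomial (Fin n) ℂ) :
    (fun r => pderiv i r)^[m] (c • p) = c • (fun r => pderiv i r)^[m] p := by
  induction m with
  | zero => rfl
  | succ m ih => simp [Function.iterate_succ_apply', ih]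

lemma iterPD_zero (i : Fin n) (m : ℕ) :
    (fun r => pderiv i r)^[m] (0 : MvPolynomial (Fin n) ℂ) = 0 := by
  induction m with
  | zero => rfl
  | succ m ih => simp [Function.iterate_succ_apply', ih]

lemma pderiv_xsub {i k : Fin n} (h : i ≠ k) (c : ℂ) (p : MvPolynomial (Fin n) ℂ) :
    pderiv i ((X k - C c) * p) = (X k - C c) * pderiv i p := by
  rw [pderiv_mul, map_sub, pderiv_X_of_ne h.symm, pderiv_C]
  ring

lemma iterPD_mul_ne {i k : Fin n} (h : i ≠ k) (m : ℕ) (c : ℂ) (p : MvPolynomial (Fin n) ℂ) :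
    (fun r => pderiv i r)^[m] ((X k - C c) * p)
      = (X k - C c) * (fun r => pderiv i r)^[m] p := by
  induction m with
  | zero => rfl
  | succ m ih => simp [Function.iterate_succ_apply', ih, pderiv_xsub h]

lemma iterPD_mul_self_succ (k : Fin n) (m : ℕ) (c : ℂ) (p : MvPolynomial (Fin n) ℂ) :
    (fun r => pderiv k r)^[m + 1] ((X k - C c) * p)
      = (X k - C c) * (fun r => pderiv k r)^[m + 1] p
        + ((m : ℂ) + 1) • (fun r => pderiv k r)^[m] p := by
  induction m with
  | zero =>
    simp only [Function.iterate_one, Function.iterate_zero, id_eq, pderiv_mul, map_sub,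
      pderiv_X_self, pderiv_C, Nat.cast_zero, zero_add, one_smul, sub_zero]
    ring
  | succ m ih =>
    rw [Function.iterate_succ_apply', ih, map_add, pderiv_mul, map_sub, pderiv_X_self, pderiv_C,
      Derivation.map_smul, ← Function.iterate_succ_apply' (fun r => pderiv k r) (m+1),
      ← Function.iterate_succ_apply' (fun r => pderiv k r) m]
    simp only [Nat.succ_eq_add_one, sub_zero, one_mul]
    push_cast
    module

lemma iterPD_mul_self (k : Fin n) (m : ℕ) (c : ℂ) (p : MvPolynomial (Fin n) ℂ) :
    (fun r => pderiv k r)^[m] ((X k - C c) * p)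
      = (X k - C c) * (fun r => pderiv k r)^[m] p
        + ((m : ℕ) : ℂ) • (fun r => pderiv k r)^[m - 1] p := by
  cases m with
  | zero => simp
  | succ m => rw [iterPD_mul_self_succ]; push_cast; simp

end Aux

section Aux2
variable {n : ℕ}

lemma foldrPD_add (l : List (Fin n)) (β : Fin n →₀ ℕ) (p q : MvPolynomial (Fin n) ℂ) :
    l.foldr (fun i q => (fun r => pderiv i r)^[β i] q) (p + q)
      = l.foldr (fun i q => (fun r => pderiv i r)^[β i] q) p
        + l.foldr (fun i q => (fun r => pderiv i r)^[β i] q) q := by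
  induction l with
  | nil => rfl
  | cons i l ih => simp [List.foldr_cons, ih, iterPD_add]

lemma foldrPD_smul (l : List (Fin n)) (β : Fin n →₀ ℕ) (c : ℂ) (p : MvPolynomial (Fin n) ℂ) :
    l.foldr (fun i q => (fun r => pderiv i r)^[β i] q) (c • p)
      = c • l.foldr (fun i q => (fun r => pderiv i r)^[β i] q) p := by
  induction l with
  | nil => rfl
  | cons i l ih => simp [List.foldr_cons, ih, iterPD_smul]

lemma foldrPD_congr (l : List (Fin n)) (β γ : Fin n →₀ ℕ) (p : MvPolynomial (Fin n) ℂ)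
    (h : ∀ i ∈ l, β i = γ i) :
    l.foldr (fun i q => (fun r => pderiv i r)^[β i] q) p
      = l.foldr (fun i q => (fun r => pderiv i r)^[γ i] q) p := by
  induction l with
  | nil => rfl
  | cons i l ih =>
    simp only [List.foldr_cons]
    rw [ih (fun j hj => h j (List.mem_cons_of_mem _ hj)), h i List.mem_cons_self]

lemma foldrPD_mul_notmem (l : List (Fin n)) (β : Fin n →₀ ℕ) (k : Fin n) (hk : k ∉ l)
    (c : ℂ) (p : MvPolynomial (Fin n) ℂ) :
    l.foldr (fun i q => (fun r => pderiv i r)^[β i] q) ((X k - C c) * p)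
      = (X k - C c) * l.foldr (fun i q => (fun r => pderiv i r)^[β i] q) p := by
  induction l with
  | nil => rfl
  | cons i l ih =>
    have hik : i ≠ k := fun h => hk (h ▸ List.mem_cons_self)
    simp only [List.foldr_cons]
    rw [ih (fun h => hk (List.mem_cons_of_mem _ h)), iterPD_mul_ne hik]

lemma foldrPD_mul (l : List (Fin n)) (hnd : l.Nodup) (β : Fin n →₀ ℕ) (k : Fin n)
    (hk : k ∈ l) (c : ℂ) (p : MvPolynomial (Fin n) ℂ) :
    l.foldr (fun i q => (fun r => pderiv i r)^[β i] q) ((X k - C c) * p)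
      = (X k - C c) * l.foldr (fun i q => (fun r => pderiv i r)^[β i] q) p
        + ((β k : ℕ) : ℂ) •
          l.foldr (fun i q => (fun r => pderiv i r)^[((β - Finsupp.single k 1 : Fin n →₀ ℕ)) i] q) p := by
  induction l with
  | nil => exact absurd hk List.not_mem_nil
  | cons i l ih =>
    rcases List.nodup_cons.mp hnd with ⟨hil, hndl⟩
    simp only [List.foldr_cons]
    by_cases hik : i = k
    · subst hik
      have hknl : i ∉ l := hil
      rw [foldrPD_mul_notmem l β i hknl, iterPD_mul_self]
      congr 2
      · have h1 : ((β - Finsupp.single i 1 : Fin n →₀ ℕ)) i = β i - 1 := by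
          simp [Finsupp.tsub_apply]
        rw [h1]
        congr 1
        exact foldrPD_congr l β (β - Finsupp.single i 1) p
          (fun j hj => by
            have hji : j ≠ i := fun h => hknl (h ▸ hj)
            simp [Finsupp.tsub_apply, Finsupp.single_apply, Ne.symm hji])
    · have hkl : k ∈ l := by
        rcases List.mem_cons.mp hk with h | h
        · exact absurd h.symm hik
        · exact h
      rw [ih hndl hkl, iterPD_add, iterPD_mul_ne hik, iterPD_smul]
      congr 2
      have h2 : ((β - Finsupp.single k 1 : Fin n →₀ ℕ)) i = β i := by
        simp [Finsupp.tsub_apply, Finsupp.single_apply, Ne.symm hik]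
      rw [h2]

lemma pdiff_mul (β : Fin n →₀ ℕ) (k : Fin n) (c : ℂ) (p : MvPolynomial (Fin n) ℂ) :
    pdiff β ((X k - C c) * p)
      = (X k - C c) * pdiff β p + ((β k : ℕ) : ℂ) • pdiff (β - Finsupp.single k 1) p :=
  foldrPD_mul (List.finRange n) (List.nodup_finRange n) β k (List.mem_finRange k) c p

lemma pdiff_add (β : Fin n →₀ ℕ) (p q : MvPolynomial (Fin n) ℂ) :
    pdiff β (p + q) = pdiff β p + pdiff β q := foldrPD_add _ _ _ _

lemma pdiff_smul (β : Fin n →₀ ℕ) (c : ℂ) (p : MvPolynomial (Fin n) ℂ) :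
    pdiff β (c • p) = c • pdiff β p := foldrPD_smul _ _ _ _

end Aux2

section Aux3
variable {n : ℕ}

lemma dapply_eq_sum (ξ : Fin n → ℂ) (Λ p : MvPolynomial (Fin n) ℂ) :
    dapply ξ Λ p = Finsupp.sum (AddMonoidAlgebra.coeff Λ) (fun β c => c * eval ξ (pdiff β p)) := rfl

lemma dapply_add_right (ξ : Fin n → ℂ) (Λ p q : MvPolynomial (Fin n) ℂ) :
    dapply ξ Λ (p + q) = dapply ξ Λ p + dapply ξ Λ q := by
  unfold dapply
  rw [← Finset.sum_add_distrib]
  exact Finset.sum_congr rfl fun β _ => by rw [pdiff_add, map_add]; ring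

lemma dapply_smul_right (ξ : Fin n → ℂ) (Λ p : MvPolynomial (Fin n) ℂ) (c : ℂ) :
    dapply ξ Λ (c • p) = c * dapply ξ Λ p := by
  unfold dapply
  rw [Finset.mul_sum]
  exact Finset.sum_congr rfl fun β _ => by
    rw [pdiff_smul, smul_eq_C_mul, map_mul, eval_C]; ring

noncomputable def dapplyR (ξ : Fin n → ℂ) (Λ : MvPolynomial (Fin n) ℂ) :
    MvPolynomial (Fin n) ℂ →ₗ[ℂ] ℂ where
  toFun p := dapply ξ Λ p
  map_add' p q := dapply_add_right ξ Λ p q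
  map_smul' c p := by simp [dapply_smul_right]

lemma dapply_zero_right (ξ : Fin n → ℂ) (Λ : MvPolynomial (Fin n) ℂ) :
    dapply ξ Λ 0 = 0 := (dapplyR ξ Λ).map_zero

lemma dapply_add_left (ξ : Fin n → ℂ) (Λ₁ Λ₂ p : MvPolynomial (Fin n) ℂ) :
    dapply ξ (Λ₁ + Λ₂) p = dapply ξ Λ₁ p + dapply ξ Λ₂ p := by
  rw [dapply_eq_sum, dapply_eq_sum, dapply_eq_sum, AddMonoidAlgebra.coeff_add]
  exact Finsupp.sum_add_index' (fun β => zero_mul _) (fun β c₁ c₂ => add_mul _ _ _)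

noncomputable def dapplyL (ξ : Fin n → ℂ) (p : MvPolynomial (Fin n) ℂ) :
    MvPolynomial (Fin n) ℂ →ₗ[ℂ] ℂ :=
  Finsupp.lsum ℂ (fun β => LinearMap.toSpanSingleton ℂ ℂ (eval ξ (pdiff β p)))
    ∘ₗ (AddMonoidAlgebra.coeffLinearEquiv ℂ).toLinearMap

lemma dapply_eq_L (ξ : Fin n → ℂ) (Λ p : MvPolynomial (Fin n) ℂ) :
    dapply ξ Λ p = dapplyL ξ p Λ := rfl

lemma dapply_smul_left (ξ : Fin n → ℂ) (c : ℂ) (Λ p : MvPolynomial (Fin n) ℂ) :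
    dapply ξ (c • Λ) p = c * dapply ξ Λ p := by
  rw [dapply_eq_L, dapply_eq_L, map_smul, smul_eq_mul]

lemma dapply_zero_left (ξ : Fin n → ℂ) (p : MvPolynomial (Fin n) ℂ) :
    dapply ξ 0 p = 0 := by
  rw [dapply_eq_sum, AddMonoidAlgebra.coeff_zero, Finsupp.sum_zero_index]

lemma dapply_monomial (ξ : Fin n → ℂ) (β : Fin n →₀ ℕ) (c : ℂ) (p : MvPolynomial (Fin n) ℂ) :
    dapply ξ (monomial β c) p = c * eval ξ (pdiff β p) := by
  rw [dapply_eq_sum]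
  have h : AddMonoidAlgebra.coeff (monomial β c : MvPolynomial (Fin n) ℂ) = Finsupp.single β c := rfl
  rw [h]
  exact Finsupp.sum_single_index (zero_mul _)

lemma dapply_pderiv (ξ : Fin n → ℂ) (k : Fin n) (Λ p : MvPolynomial (Fin n) ℂ) :
    dapply ξ (pderiv k Λ) p = dapply ξ Λ ((X k - C (ξ k)) * p) := by
  induction Λ using MvPolynomial.induction_on' with
  | monomial β c =>
    rw [pderiv_monomial, dapply_monomial, dapply_monomial, pdiff_mul, map_add, map_mul,
      map_sub, eval_X, eval_C, sub_self, zero_mul, zero_add]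
    simp [smul_eq_mul]
    ring
  | add q r hq hr =>
    rw [map_add, dapply_add_left, dapply_add_left, hq, hr]

end Aux3

section Aux4
variable {n : ℕ}

lemma totalDegree_pderiv_le {f : MvPolynomial (Fin n) ℂ} {k : Fin n} {d : ℕ}
    (h : f.totalDegree ≤ d + 1) : (pderiv k f).totalDegree ≤ d := by
  conv_lhs => rw [f.as_sum]
  rw [map_sum]
  refine (totalDegree_finset_sum _ _).trans (Finset.sup_le ?_)
  intro s hs
  rw [pderiv_monomial]
  rcases Nat.eq_zero_or_pos (s k) with h0 | h0
  · simp [h0]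
  · refine (totalDegree_monomial_le _ _).trans ?_
    have hsum : (Finsupp.sum s fun _ e => e) ≤ d + 1 :=
      le_trans (MvPolynomial.le_totalDegree hs) h
    rw [Finsupp.sum_fintype _ _ (fun _ => rfl)] at hsum ⊢
    rw [← Finset.add_sum_erase _ _ (Finset.mem_univ k)] at hsum ⊢
    have h1 : ((s - Finsupp.single k 1 : Fin n →₀ ℕ)) k = s k - 1 := by
      simp [Finsupp.tsub_apply]
    have h2 : ∑ j ∈ Finset.univ.erase k, ((s - Finsupp.single k 1 : Fin n →₀ ℕ)) j
        = ∑ j ∈ Finset.univ.erase k, s j := by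
      refine Finset.sum_congr rfl fun j hj => ?_
      have hjk : j ≠ k := Finset.ne_of_mem_erase hj
      simp [Finsupp.tsub_apply, Finsupp.single_apply, Ne.symm hjk]
    simp only [id_eq]
    rw [h1, h2]
    omega

end Aux4

section Aux5
variable {n : ℕ}

lemma dapply_sub_right (ξ : Fin n → ℂ) (Λ p q : MvPolynomial (Fin n) ℂ) :
    dapply ξ Λ (p - q) = dapply ξ Λ p - dapply ξ Λ q :=
  (dapplyR ξ Λ).map_sub p q

lemma dapply_sum_right {ι : Type*} (ξ : Fin n → ℂ) (Λ : MvPolynomial (Fin n) ℂ)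
    (s : Finset ι) (g : ι → MvPolynomial (Fin n) ℂ) :
    dapply ξ Λ (∑ i ∈ s, g i) = ∑ i ∈ s, dapply ξ Λ (g i) :=
  map_sum (dapplyR ξ Λ) g s

end Aux5


/-- the perturbed system f_ε* = f − ε*·B_{ξ*} with ε*_{i,j} = Λ*_j(f_i)
is annihilated by the dual space D* = span Λ*; if moreover D* is complete for f_ε* at
ξ*, then D* is exactly the inverse system of f_ε* at ξ*, so ξ* is a root of
multiplicity exactly μ with inverse system D*. -/
theorem statement15 {n N m : ℕ} (hm : 0 < m) (ξs : Fin n → ℂ)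
    (f : Fin N → MvPolynomial (Fin n) ℂ)
    (β : Fin m → (Fin n →₀ ℕ)) (hβ0 : β ⟨0, hm⟩ = 0)
    (hdiv : ∀ (i : Fin m) (k : Fin n), β i k ≠ 0 → ∃ j, β j = β i - Finsupp.single k 1)
    (Λs : Fin m → MvPolynomial (Fin n) ℂ) (hΛ0 : Λs ⟨0, hm⟩ = 1)
    (hdual : ∀ i j, dapply ξs (Λs i) (xpow ξs (β j)) = if i = j then 1 else 0)
    (hstab : ∀ Λ ∈ Submodule.span ℂ (Set.range Λs), ∀ k : Fin n,
        pderiv k Λ ∈ Submodule.span ℂ (Set.range Λs))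
    (fPert : Fin N → MvPolynomial (Fin n) ℂ)
    (hfPert : ∀ i, fPert i = f i - ∑ j, dapply ξs (Λs j) (f i) • xpow ξs (β j)) :
    (∀ (i : Fin N) (j : Fin m), dapply ξs (Λs j) (fPert i) = 0) ∧
    (∀ Λ ∈ Submodule.span ℂ (Set.range Λs), ∀ p ∈ Ideal.span (Set.range fPert),
      dapply ξs Λ p = 0) ∧
    ((∀ Δ : MvPolynomial (Fin n) ℂ,
        (∀ k : Fin n, pderiv k Δ ∈ Submodule.span ℂ (Set.range Λs)) →
        (∀ i : Fin N, dapply ξs Δ (fPert i) = 0) →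
        Δ ∈ Submodule.span ℂ (Set.range Λs)) →
      (↑(Submodule.span ℂ (Set.range Λs)) : Set (MvPolynomial (Fin n) ℂ)) =
        {Λ | ∀ p ∈ Ideal.span (Set.range fPert), dapply ξs Λ p = 0}) := by
  classical
  -- Part 1
  have h1 : ∀ (i : Fin N) (j : Fin m), dapply ξs (Λs j) (fPert i) = 0 := by
    intro i j
    rw [hfPert i, dapply_sub_right, dapply_sum_right]
    simp only [dapply_smul_right, hdual]
    simp [Finset.sum_ite_eq, mul_ite, mul_one, mul_zero]
  -- span of Λs annihilates anything each Λs j annihilates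
  have hspanv : ∀ q : MvPolynomial (Fin n) ℂ, (∀ j, dapply ξs (Λs j) q = 0) →
      ∀ Λ ∈ Submodule.span ℂ (Set.range Λs), dapply ξs Λ q = 0 := by
    intro q hq Λ hΛ
    induction hΛ using Submodule.span_induction with
    | mem x hx => obtain ⟨j, rfl⟩ := hx; exact hq j
    | zero => exact dapply_zero_left ξs q
    | add x y hx hy ihx ihy => rw [dapply_add_left, ihx, ihy, add_zero]
    | smul c x hx ihx => rw [dapply_smul_left, ihx, mul_zero]
  -- multiplication stability
  have hmul : ∀ g q : MvPolynomial (Fin n) ℂ,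
      (∀ Λ ∈ Submodule.span ℂ (Set.range Λs), dapply ξs Λ q = 0) →
      ∀ Λ ∈ Submodule.span ℂ (Set.range Λs), dapply ξs Λ (g * q) = 0 := by
    intro g
    induction g using MvPolynomial.induction_on with
    | C a =>
      intro q hq Λ hΛ
      rw [← smul_eq_C_mul, dapply_smul_right, hq Λ hΛ, mul_zero]
    | add g₁ g₂ ih₁ ih₂ =>
      intro q hq Λ hΛ
      rw [add_mul, dapply_add_right, ih₁ q hq Λ hΛ, ih₂ q hq Λ hΛ, add_zero]
    | mul_X g k ih =>
      intro q hq Λ hΛ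
      have hq' : ∀ Λ' ∈ Submodule.span ℂ (Set.range Λs), dapply ξs Λ' (X k * q) = 0 := by
        intro Λ' hΛ'
        have hxk : (X k : MvPolynomial (Fin n) ℂ) * q
            = (X k - C (ξs k)) * q + ξs k • q := by
          rw [smul_eq_C_mul]; ring
        rw [hxk, dapply_add_right, dapply_smul_right, ← dapply_pderiv,
          hq _ (hstab Λ' hΛ' k), hq Λ' hΛ', mul_zero, add_zero]
      have hassoc : g * X k * q = g * (X k * q) := by ring
      rw [hassoc]
      exact ih (X k * q) hq' Λ hΛ
  -- every element of the ideal is annihilated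
  have hall : ∀ p ∈ Ideal.span (Set.range fPert),
      ∀ Λ ∈ Submodule.span ℂ (Set.range Λs), dapply ξs Λ p = 0 := by
    intro p hp
    induction hp using Submodule.span_induction with
    | mem x hx =>
      obtain ⟨i, rfl⟩ := hx
      exact hspanv (fPert i) (fun j => h1 i j)
    | zero => exact fun Λ _ => dapply_zero_right ξs Λ
    | add x y hx hy ihx ihy =>
      intro Λ hΛ
      rw [dapply_add_right, ihx Λ hΛ, ihy Λ hΛ, add_zero]
    | smul a x hx ihx =>
      intro Λ hΛ
      rw [smul_eq_mul]
      exact hmul a x ihx Λ hΛ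
  refine ⟨h1, fun Λ hΛ p hp => hall p hp Λ hΛ, ?_⟩
  -- Part 2
  intro hcomp
  apply Set.Subset.antisymm
  · intro Λ hΛ p hp
    exact hall p hp Λ hΛ
  · intro Δ hΔ
    simp only [Set.mem_setOf_eq] at hΔ
    have key : ∀ d : ℕ, ∀ Δ' : MvPolynomial (Fin n) ℂ, Δ'.totalDegree ≤ d →
        (∀ p ∈ Ideal.span (Set.range fPert), dapply ξs Δ' p = 0) →
        Δ' ∈ Submodule.span ℂ (Set.range Λs) := by
      intro d
      induction d with
      | zero =>
        intro Δ' hdeg hann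
        refine hcomp Δ' (fun k => ?_) (fun i => hann (fPert i) (Ideal.subset_span ⟨i, rfl⟩))
        have hzero : pderiv k Δ' = 0 := by
          have h0 := (totalDegree_eq_zero_iff _ Δ').mp (Nat.le_zero.mp hdeg)
          conv_lhs => rw [Δ'.as_sum]
          rw [map_sum]
          refine Finset.sum_eq_zero fun s hs => ?_
          rw [pderiv_monomial, h0 s hs k]
          simp
        rw [hzero]
        exact Submodule.zero_mem _
      | succ d ih =>
        intro Δ' hdeg hann
        refine hcomp Δ' (fun k => ?_) (fun i => hann (fPert i) (Ideal.subset_span ⟨i, rfl⟩))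
        refine ih (pderiv k Δ') (totalDegree_pderiv_le hdeg) ?_
        intro p hp
        rw [dapply_pderiv]
        exact hann _ (Ideal.mul_mem_left _ _ hp)
    exact key Δ.totalDegree Δ le_rfl hΔ
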